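/- arXiv:2212.08940 — 3 statements merged into one kernel-verified Lean document; each statement's English description precedes it below -/
import Mathlib

section
/- Let {Λ_i ∈ End*_A(H, V_i)}_{i∈I} be such that Σ_i ⟨Λ_i x, Λ_i x⟩ converges in norm for every x ∈ H. Then {Λ_i} is a g-frame for H with respect to {V_i} if and only if there exist constants A, B > 0 such that A‖x‖² ≤ ‖Σ_i ⟨Λ_i x, Λ_i x⟩‖ ≤ B‖x‖² for all x ∈ H. -/
open scoped InnerProductSpace RightActions

/-- The Hilbert C⋆-module class as it stood in Mathlib of December 2024 (right `A`-action
through `Aᵐᵒᵖ`); Mathlib's `CStarModule` now uses a left action. -/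
class CStarModuleOld (A E : Type*) [NonUnitalSemiring A] [StarRing A]
    [Module ℂ A] [AddCommGroup E] [Module ℂ E] [PartialOrder A] [SMul Aᵐᵒᵖ E] [Norm A] [Norm E]
    extends Inner A E where
  inner_add_right {x} {y} {z} : inner x (y + z) = inner x y + inner x z
  inner_self_nonneg {x} : 0 ≤ inner x x
  inner_self {x} : inner x x = 0 ↔ x = 0
  inner_op_smul_right {a : A} {x y : E} : inner x (y <• a) = inner x y * a
  inner_smul_right_complex {z : ℂ} {x} {y} : inner x (z • y) = z • inner x y
  star_inner x y : star (inner x y) = inner y x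
  norm_eq_sqrt_norm_inner_self x : ‖x‖ = √‖inner x x‖

namespace CStarModuleOld

lemma norm_sq_eq {A : Type*} [CStarAlgebra A] [PartialOrder A]
    {E : Type*} [NormedAddCommGroup E] [NormedSpace ℂ E] [SMul Aᵐᵒᵖ E] [CStarModuleOld A E]
    (x : E) : ‖x‖ ^ 2 = ‖⟪x, x⟫_A‖ := by
  rw [norm_eq_sqrt_norm_inner_self (A := A) x, Real.sq_sqrt (norm_nonneg _)]

lemma inner_op_smul_left {A : Type*} [CStarAlgebra A] [PartialOrder A]
    {E : Type*} [NormedAddCommGroup E] [NormedSpace ℂ E] [SMul Aᵐᵒᵖ E] [CStarModuleOld A E]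
    {a : A} {x y : E} : ⟪x <• a, y⟫_A = star a * ⟪x, y⟫_A := by
  rw [← star_inner y (x <• a), inner_op_smul_right, star_mul, star_inner]

lemma inner_sub_left {A : Type*} [CStarAlgebra A] [PartialOrder A]
    {E : Type*} [NormedAddCommGroup E] [NormedSpace ℂ E] [SMul Aᵐᵒᵖ E] [CStarModuleOld A E]
    {x y z : E} : ⟪x - y, z⟫_A = ⟪x, z⟫_A - ⟪y, z⟫_A := by
  have hneg : ∀ u v : E, ⟪u, -v⟫_A = -⟪u, v⟫_A := by
    intro u v
    have := inner_smul_right_complex (A := A) (z := (-1 : ℂ)) (x := u) (y := v)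
    simpa using this
  rw [← star_inner z (x - y), sub_eq_add_neg, inner_add_right, hneg, star_add, star_neg,
    star_inner, star_inner, ← sub_eq_add_neg]

end CStarModuleOld

lemma gframe_aux_key {A : Type*} [CStarAlgebra A] [PartialOrder A] [StarOrderedRing A]
    (p b : A) (hp : 0 ≤ p) (hb : 0 ≤ b) (D : ℝ) (hD : 0 < D)
    (hcond : ∀ a : A, ‖star a * p * a‖ ≤ D * ‖star a * b * a‖) :
    p ≤ D • b := by
  have hb' : IsSelfAdjoint b := .of_nonneg hb
  suffices h : ∀ ε : ℝ, 0 < ε → p ≤ D • b + (D * ε) • 1 by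
    refine ge_of_tendsto'
      (f := fun n : ℕ => D • b + (D * (1 / (n + 1))) • (1 : A)) (x := Filter.atTop) ?_
      fun n => h _ (by positivity)
    have h1 : Filter.Tendsto (fun n : ℕ => D * (1 / (n + 1))) Filter.atTop (nhds 0) := by
      have := tendsto_one_div_add_atTop_nhds_zero_nat (𝕜 := ℝ)
      simpa using (this.const_mul D)
    have h2 : Filter.Tendsto (fun n : ℕ => (D * (1 / (n + 1))) • (1 : A))
        Filter.atTop (nhds ((0 : ℝ) • (1 : A))) := h1.smul_const _
    simpa using tendsto_const_nhds.add h2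
  intro ε hε
  have hspec : ∀ t ∈ spectrum ℝ b, 0 ≤ t := fun t ht => spectrum_nonneg_of_nonneg hb ht
  set f : ℝ → ℝ := fun t => (Real.sqrt (t + ε))⁻¹ with hf_def
  set g : ℝ → ℝ := fun t => Real.sqrt (t + ε) with hg_def
  have hg : Continuous g := Real.continuous_sqrt.comp (continuous_id.add continuous_const)
  have hgpos : ∀ t ∈ spectrum ℝ b, 0 < g t := fun t ht =>
    Real.sqrt_pos.mpr (by have := hspec t ht; linarith)
  have hf : ContinuousOn f (spectrum ℝ b) :=
    ContinuousOn.inv₀ hg.continuousOn fun t ht => (hgpos t ht).ne'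
  set r : A := cfc f b with hr_def
  set s : A := cfc g b with hs_def
  have hr_nonneg : 0 ≤ r := cfc_nonneg fun t _ => by positivity
  have hs_nonneg : 0 ≤ s := cfc_nonneg fun t _ => Real.sqrt_nonneg _
  have hr_sa : IsSelfAdjoint r := .of_nonneg hr_nonneg
  have hs_sa : IsSelfAdjoint s := .of_nonneg hs_nonneg
  have hsr : s * r = 1 := by
    rw [hs_def, hr_def, ← cfc_mul g f b hg.continuousOn hf]
    calc cfc (fun t => g t * f t) b = cfc (1 : ℝ → ℝ) b :=
          cfc_congr fun t ht => mul_inv_cancel₀ (hgpos t ht).ne'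
      _ = 1 := cfc_one ℝ b
  have hrs : r * s = 1 := by
    rw [hs_def, hr_def, ← cfc_mul f g b hf hg.continuousOn]
    calc cfc (fun t => f t * g t) b = cfc (1 : ℝ → ℝ) b :=
          cfc_congr fun t ht => inv_mul_cancel₀ (hgpos t ht).ne'
      _ = 1 := cfc_one ℝ b
  have hss : s * s = b + algebraMap ℝ A ε := by
    rw [hs_def, ← cfc_mul g g b hg.continuousOn hg.continuousOn]
    calc cfc (fun t => g t * g t) b = cfc (fun t : ℝ => t + ε) b :=
          cfc_congr fun t ht => Real.mul_self_sqrt (by have := hspec t ht; linarith)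
      _ = b + algebraMap ℝ A ε := by
          rw [cfc_add (a := b) (fun t : ℝ => t) (fun _ : ℝ => ε) (by fun_prop)
            (by fun_prop), cfc_id' ℝ b, cfc_const ε b]
  have hmid : cfc (fun t : ℝ => t * f t) b = b * r := by
    rw [cfc_mul (fun t : ℝ => t) f b (by fun_prop) hf, cfc_id' ℝ b, hr_def]
  have hrbr : r * (b * r) = cfc (fun t => f t * (t * f t)) b := by
    rw [cfc_mul f (fun t => t * f t) b hf (ContinuousOn.mul continuous_id.continuousOn hf),
      hmid, hr_def]
  have hnorm_rbr : ‖r * (b * r)‖ ≤ 1 := by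
    rw [hrbr]
    refine norm_cfc_le zero_le_one fun t ht => ?_
    have ht0 := hspec t ht
    have hgt := hgpos t ht
    rw [Real.norm_eq_abs, abs_of_nonneg (by positivity)]
    have hfg : f t * (t * f t) = t / (t + ε) := by
      have hs2 : Real.sqrt (t + ε) * Real.sqrt (t + ε) = t + ε :=
        Real.mul_self_sqrt (by linarith)
      rw [hf_def]
      field_simp
      rw [Real.sq_sqrt (by linarith)]
    rw [hfg]
    exact div_le_one_of_le₀ (by linarith) (by linarith)
  have h1 : ‖r * p * r‖ ≤ D := by
    have hc := hcond r
    rw [hr_sa.star_eq] at hc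
    refine hc.trans ?_
    have : ‖r * b * r‖ ≤ 1 := by rw [mul_assoc]; exact hnorm_rbr
    nlinarith [norm_nonneg (r * b * r)]
  have hpr_nonneg : 0 ≤ r * p * r := by
    have := star_left_conjugate_nonneg hp r
    rwa [hr_sa.star_eq] at this
  have h2 : r * p * r ≤ algebraMap ℝ A D := by
    refine (IsSelfAdjoint.le_algebraMap_norm_self (.of_nonneg hpr_nonneg)).trans ?_
    rw [Algebra.algebraMap_eq_smul_one, Algebra.algebraMap_eq_smul_one]
    exact smul_le_smul_of_nonneg_right h1 zero_le_one
  have h3 := IsSelfAdjoint.conjugate_le_conjugate h2 hs_sa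
  have hL : s * (r * p * r) * s = p := by
    have e : s * (r * p * r) * s = (s * r) * p * (r * s) := by noncomm_ring
    rw [e, hsr, hrs, one_mul, mul_one]
  have hR : s * algebraMap ℝ A D * s = D • b + (D * ε) • 1 := by
    rw [Algebra.algebraMap_eq_smul_one]
    calc s * (D • (1 : A)) * s = D • (s * s) := by
          rw [mul_smul_comm, mul_one, smul_mul_assoc]
      _ = D • b + (D * ε) • 1 := by
          rw [hss, smul_add, Algebra.algebraMap_eq_smul_one, smul_smul]
  rw [hL, hR] at h3
  exact h3


/-- Let `Λ i ∈ End*_A(H, V i)` with `∑ᵢ ⟪Λᵢx, Λᵢx⟫` norm convergent for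
every `x`. Then `{Λ i}` is a g-frame for `H` w.r.t. `{V i}` iff there are constants
`C, D > 0` with `C‖x‖² ≤ ‖∑ᵢ ⟪Λᵢx, Λᵢx⟫‖ ≤ D‖x‖²` for all `x`. -/
theorem gFrame_iff_norm_bounds
    {A : Type*} [CStarAlgebra A] [PartialOrder A] [StarOrderedRing A]
    {H : Type*} [NormedAddCommGroup H] [NormedSpace ℂ H] [SMul Aᵐᵒᵖ H] [CStarModuleOld A H]
    {ι : Type*} {V : ι → Type*} [∀ i, NormedAddCommGroup (V i)] [∀ i, NormedSpace ℂ (V i)]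
    [∀ i, SMul Aᵐᵒᵖ (V i)] [∀ i, CStarModuleOld A (V i)]
    (Λ : ∀ i, H →L[ℂ] V i) (Λad : ∀ i, V i →L[ℂ] H)
    (hadj : ∀ (i) (x : H) (v : V i), ⟪Λ i x, v⟫_A = ⟪x, Λad i v⟫_A)
    (hsum : ∀ x : H, Summable fun i => ⟪Λ i x, Λ i x⟫_A) :
    (∃ C D : ℝ, 0 < C ∧ 0 < D ∧ ∀ x : H,
        C • ⟪x, x⟫_A ≤ ∑' i, ⟪Λ i x, Λ i x⟫_A ∧
        (∑' i, ⟪Λ i x, Λ i x⟫_A) ≤ D • ⟪x, x⟫_A) ↔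
    (∃ C D : ℝ, 0 < C ∧ 0 < D ∧ ∀ x : H,
        C * ‖x‖ ^ 2 ≤ ‖∑' i, ⟪Λ i x, Λ i x⟫_A‖ ∧
        ‖∑' i, ⟪Λ i x, Λ i x⟫_A‖ ≤ D * ‖x‖ ^ 2) := by
  set S : H → A := fun x => ∑' i, ⟪Λ i x, Λ i x⟫_A with hS_def
  have hS0 : ∀ x, 0 ≤ S x := fun x => tsum_nonneg fun i => CStarModuleOld.inner_self_nonneg
  have hxx0 : ∀ x : H, 0 ≤ (⟪x, x⟫_A) := fun x => CStarModuleOld.inner_self_nonneg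
  constructor
  · rintro ⟨C, D, hC, hD, h⟩
    refine ⟨C, D, hC, hD, fun x => ?_⟩
    obtain ⟨h1, h2⟩ := h x
    constructor
    · calc C * ‖x‖ ^ 2 = ‖C • ⟪x, x⟫_A‖ := by
            rw [norm_smul, Real.norm_eq_abs, abs_of_pos hC, CStarModuleOld.norm_sq_eq (A := A)]
        _ ≤ ‖S x‖ :=
            CStarAlgebra.norm_le_norm_of_nonneg_of_le (smul_nonneg hC.le (hxx0 x)) h1
    · calc ‖S x‖ ≤ ‖D • ⟪x, x⟫_A‖ :=
            CStarAlgebra.norm_le_norm_of_nonneg_of_le (hS0 x) h2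
        _ = D * ‖x‖ ^ 2 := by
            rw [norm_smul, Real.norm_eq_abs, abs_of_pos hD, CStarModuleOld.norm_sq_eq (A := A)]
  · rintro ⟨C, D, hC, hD, h⟩
    have hmod : ∀ (i) (a : A) (x : H), Λ i (x <• a) = (Λ i x) <• a := by
      intro i a x
      have key : ∀ v : V i, (⟪Λ i (x <• a), v⟫_A) = ⟪(Λ i x) <• a, v⟫_A := by
        intro v
        rw [hadj, CStarModuleOld.inner_op_smul_left, CStarModuleOld.inner_op_smul_left, hadj]
      have hd : (⟪Λ i (x <• a) - (Λ i x) <• a, Λ i (x <• a) - (Λ i x) <• a⟫_A) = 0 := by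
        rw [CStarModuleOld.inner_sub_left, key, sub_self]
      exact sub_eq_zero.mp (CStarModuleOld.inner_self.mp hd)
    have hq : ∀ (a : A) (x : H), S (x <• a) = star a * S x * a := by
      intro a x
      have e : ∀ i, (⟪Λ i (x <• a), Λ i (x <• a)⟫_A) = star a * ⟪Λ i x, Λ i x⟫_A * a := by
        intro i
        rw [hmod, CStarModuleOld.inner_op_smul_left, CStarModuleOld.inner_op_smul_right, ← mul_assoc]
      calc S (x <• a) = ∑' i, star a * (⟪Λ i x, Λ i x⟫_A) * a := tsum_congr e
        _ = (∑' i, star a * (⟪Λ i x, Λ i x⟫_A)) * a :=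
            Summable.tsum_mul_right a ((hsum x).mul_left (star a))
        _ = star a * S x * a := by rw [(hsum x).tsum_mul_left (star a)]
    have hnormsq : ∀ (a : A) (x : H), star a * (⟪x, x⟫_A) * a = ⟪x <• a, x <• a⟫_A := by
      intro a x
      rw [CStarModuleOld.inner_op_smul_left, CStarModuleOld.inner_op_smul_right, mul_assoc]
    refine ⟨C, D, hC, hD, fun x => ?_⟩
    constructor
    · have hkey : (⟪x, x⟫_A) ≤ (1 / C) • S x := by
        refine gframe_aux_key _ _ (hxx0 x) (hS0 x) (1 / C) (by positivity) fun a => ?_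
        rw [hnormsq, ← hq a x, ← CStarModuleOld.norm_sq_eq (A := A)]
        have h1 := (h (x <• a)).1
        rw [div_mul_eq_mul_div, le_div_iff₀ hC]
        linarith
      calc C • ⟪x, x⟫_A ≤ C • ((1 / C) • S x) := smul_le_smul_of_nonneg_left hkey hC.le
        _ = S x := by rw [smul_smul, mul_one_div, div_self hC.ne', one_smul]
    · refine gframe_aux_key _ _ (hS0 x) (hxx0 x) D hD fun a => ?_
      rw [← hq a x, hnormsq, ← CStarModuleOld.norm_sq_eq (A := A)]
      exact (h (x <• a)).2
end

section
/- Let {Λ_i}_{i∈I} be a K-g-frame for a Hilbert A-module H with bounds A₁, B₁, and let T ∈ End*_A(H) be a co-isometry (TT* = Id) with TK = KT. Then {Λ_iT*}_{i∈I} is a K-g-frame for H with bounds A₁ and B₁‖T*‖². -/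
open scoped InnerProductSpace RightActions

/-- Let `{Λ i}` be a `K`-g-frame for `H` with bounds `A₁, B₁`, and let
`T ∈ End*_A(H)` be a co-isometry (`T T⋆ = Id`) with `T K = K T`.  Then `{Λᵢ T⋆}` is a
`K`-g-frame for `H` with bounds `A₁` and `B₁ ‖T⋆‖²`. -/
theorem kgFrame_comp_coisometry
    {A : Type*} [CStarAlgebra A] [PartialOrder A] [StarOrderedRing A]
    {H : Type*} [NormedAddCommGroup H] [NormedSpace ℂ H] [SMul A H] [CStarModule A H]
    {ι : Type*} {V : ι → Type*} [∀ i, NormedAddCommGroup (V i)] [∀ i, NormedSpace ℂ (V i)]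
    [∀ i, SMul A (V i)] [∀ i, CStarModule A (V i)]
    (Λ : ∀ i, H →L[ℂ] V i) (Λad : ∀ i, V i →L[ℂ] H)
    (hΛadj : ∀ (i) (x : H) (v : V i), ⟪Λ i x, v⟫_A = ⟪x, Λad i v⟫_A)
    (hsum : ∀ x : H, Summable fun i => ⟪Λ i x, Λ i x⟫_A)
    (K : H →L[ℂ] H) (Kad : H →L[ℂ] H)
    (hKadj : ∀ x y : H, ⟪K x, y⟫_A = ⟪x, Kad y⟫_A)
    (T : H →L[ℂ] H) (Tad : H →L[ℂ] H)
    (hTadj : ∀ x y : H, ⟪T x, y⟫_A = ⟪x, Tad y⟫_A)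
    (hcoiso : ∀ x : H, T (Tad x) = x)
    (hcomm : ∀ x : H, T (K x) = K (T x))
    (A₁ B₁ : ℝ) (hA₁ : 0 < A₁) (hB₁ : 0 < B₁)
    (hframe : ∀ x : H,
      A₁ • ⟪Kad x, Kad x⟫_A ≤ ∑' i, ⟪Λ i x, Λ i x⟫_A ∧
      (∑' i, ⟪Λ i x, Λ i x⟫_A) ≤ B₁ • ⟪x, x⟫_A) :
    (∀ x : H, Summable fun i => ⟪Λ i (Tad x), Λ i (Tad x)⟫_A) ∧
    ∀ x : H,
      A₁ • ⟪Kad x, Kad x⟫_A ≤ ∑' i, ⟪Λ i (Tad x), Λ i (Tad x)⟫_A ∧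
      (∑' i, ⟪Λ i (Tad x), Λ i (Tad x)⟫_A) ≤ (B₁ * ‖Tad‖ ^ 2) • ⟪x, x⟫_A := by
  -- Tad is an isometry on inner products
  have hTiso : ∀ y : H, ⟪Tad y, Tad y⟫_A = (⟪y, y⟫_A : A) := by
    intro y
    have h := hTadj (Tad y) y
    rw [hcoiso] at h
    exact h.symm
  -- inner product injectivity
  have hinj : ∀ a b : H, (∀ y : H, ⟪y, a⟫_A = ⟪y, b⟫_A) → a = b := by
    intro a b h
    have h0 : ⟪a - b, a - b⟫_A = (0 : A) := by
      rw [CStarModule.inner_sub_right, h (a - b), sub_self]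
    exact sub_eq_zero.mp (CStarModule.inner_self.mp h0)
  -- Kad and Tad commute
  have hcomm' : ∀ x : H, Kad (Tad x) = Tad (Kad x) := by
    intro x
    apply hinj
    intro y
    rw [← hKadj, ← hTadj, ← hTadj, ← hKadj, hcomm]
  -- key: ⟪Kad (Tad x), Kad (Tad x)⟫ = ⟪Kad x, Kad x⟫
  have hkey : ∀ x : H, ⟪Kad (Tad x), Kad (Tad x)⟫_A = (⟪Kad x, Kad x⟫_A : A) := by
    intro x
    rw [hcomm', hTiso]
  refine ⟨fun x => hsum (Tad x), fun x => ?_⟩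
  obtain ⟨h1, h2⟩ := hframe (Tad x)
  constructor
  · calc A₁ • ⟪Kad x, Kad x⟫_A = A₁ • ⟪Kad (Tad x), Kad (Tad x)⟫_A := by rw [hkey]
      _ ≤ _ := h1
  · refine h2.trans ?_
    rw [hTiso]
    by_cases hx : x = 0
    · simp [hx]
    · have hTadnorm : (1 : ℝ) ≤ ‖Tad‖ := by
        have hnx : ‖Tad x‖ = ‖x‖ := by
          rw [CStarModule.norm_eq_sqrt_norm_inner_self (E := H) (A := A),
            CStarModule.norm_eq_sqrt_norm_inner_self (E := H) (A := A) (x := x), hTiso]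
        have hle : ‖x‖ ≤ ‖Tad‖ * ‖x‖ := hnx ▸ Tad.le_opNorm x
        have hxpos : 0 < ‖x‖ := norm_pos_iff.mpr hx
        exact le_of_mul_le_mul_right (by linarith) hxpos
      have hsq : (1:ℝ) ≤ ‖Tad‖ ^ 2 := by nlinarith
      have hc : B₁ ≤ B₁ * ‖Tad‖ ^ 2 := by nlinarith
      have := CStarModule.inner_self_nonneg (x := x) (A := A)
      calc B₁ • ⟪x, x⟫_A ≤ (B₁ * ‖Tad‖ ^ 2) • ⟪x, x⟫_A := by
            rw [← sub_nonneg, ← sub_smul]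
            exact smul_nonneg (by linarith) this
        _ = _ := rfl
end

section
/- Let {T_i}_{i∈I} be an operator frame for End*_A(H) with bounds ν and δ, and let {R_i}_{i∈I} ⊂ End*_A(H) be an operator Bessel family with bound ξ < ν. Then {T_i + R_i}_{i∈I} is an operator frame for H with bounds (√ν − √ξ)² and (√δ + √ξ)². -/
open scoped InnerProductSpace RightActions

lemma aux_key {A : Type*} [CStarAlgebra A] [PartialOrder A] [StarOrderedRing A]
    {H : Type*} [NormedAddCommGroup H] [NormedSpace ℂ H] [SMul A H] [CStarModule A H]
    (a b : H) {t : ℝ} (ht : 0 < t) :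
    ⟪a + b, a + b⟫_A ≤ (1 + t) • ⟪a, a⟫_A + (1 + t⁻¹) • ⟪b, b⟫_A := by
  have hst : Real.sqrt t * Real.sqrt t = t := Real.mul_self_sqrt ht.le
  have hsne : Real.sqrt t ≠ 0 := by positivity
  have h0 : (0 : A) ≤ ⟪Real.sqrt t • a - (Real.sqrt t)⁻¹ • b,
      Real.sqrt t • a - (Real.sqrt t)⁻¹ • b⟫_A := CStarModule.inner_self_nonneg
  have hexp : ⟪Real.sqrt t • a - (Real.sqrt t)⁻¹ • b,
      Real.sqrt t • a - (Real.sqrt t)⁻¹ • b⟫_A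
      = t • ⟪a, a⟫_A - ⟪a, b⟫_A - ⟪b, a⟫_A + t⁻¹ • ⟪b, b⟫_A := by
    simp only [CStarModule.inner_sub_left, CStarModule.inner_sub_right,
      CStarModule.inner_smul_left_real, CStarModule.inner_smul_right_real, smul_sub, smul_smul]
    rw [hst, mul_inv_cancel₀ hsne, inv_mul_cancel₀ hsne, ← mul_inv, hst, one_smul, one_smul]
    abel
  have hcross : ⟪a, b⟫_A + ⟪b, a⟫_A ≤ t • ⟪a, a⟫_A + t⁻¹ • ⟪b, b⟫_A := by
    rw [hexp] at h0
    rw [← sub_nonneg]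
    convert h0 using 1
    abel
  have hsum : ⟪a + b, a + b⟫_A
      = ⟪a, a⟫_A + (⟪a, b⟫_A + ⟪b, a⟫_A) + ⟪b, b⟫_A := by
    simp [CStarModule.inner_add_right]; abel
  rw [hsum, add_smul, add_smul, one_smul, one_smul]
  calc ⟪a, a⟫_A + (⟪a, b⟫_A + ⟪b, a⟫_A) + ⟪b, b⟫_A
      ≤ ⟪a, a⟫_A + (t • ⟪a, a⟫_A + t⁻¹ • ⟪b, b⟫_A) + ⟪b, b⟫_A := by
        gcongr
    _ = ⟪a, a⟫_A + t • ⟪a, a⟫_A + (⟪b, b⟫_A + t⁻¹ • ⟪b, b⟫_A) := by abel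

lemma aux_summable {A : Type*} [CStarAlgebra A] [PartialOrder A] [StarOrderedRing A]
    {ι : Type*} {f g : ι → A} (hf : ∀ i, 0 ≤ f i) (hfg : ∀ i, f i ≤ g i)
    (hg : Summable g) : Summable f := by
  rw [summable_iff_vanishing_norm] at hg ⊢
  intro ε hε
  obtain ⟨s, hs⟩ := hg ε hε
  refine ⟨s, fun t ht => ?_⟩
  have h1 : (0 : A) ≤ ∑ i ∈ t, f i := Finset.sum_nonneg fun i _ => hf i
  have h2 : ∑ i ∈ t, f i ≤ ∑ i ∈ t, g i := Finset.sum_le_sum fun i _ => hfg i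
  exact lt_of_le_of_lt (CStarAlgebra.norm_le_norm_of_nonneg_of_le h1 h2) (hs t ht)


lemma aux_upper {s1 s2 c S TN RN : ℝ} (hs1 : 0 < s1) (hs2 : 0 < s2) (hc : 0 ≤ c)
    (hT : TN ≤ s1 * s1 * c) (hR : RN ≤ s2 * s2 * c)
    (hS : S ≤ (1 + s2 / s1) * TN + (1 + (s2 / s1)⁻¹) * RN) :
    S ≤ (s1 + s2) ^ 2 * c := by
  have h' : S ≤ (1 + s2 / s1) * (s1 * s1 * c) + (1 + (s2 / s1)⁻¹) * (s2 * s2 * c) := by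
    refine hS.trans ?_
    gcongr <;> positivity
  refine h'.trans (le_of_eq ?_)
  rw [inv_div]
  field_simp
  ring

lemma aux_lower {s1 s2 c S TN RN : ℝ} (hs2 : 0 < s2) (hs12 : s2 < s1) (hc : 0 ≤ c)
    (hS0 : 0 ≤ S) (hTN : s1 * s1 * c ≤ TN) (hRN : RN ≤ s2 * s2 * c)
    (h : TN ≤ (1 + s2 / (s1 - s2)) * S + (1 + (s2 / (s1 - s2))⁻¹) * RN) :
    (s1 - s2) ^ 2 * c ≤ S := by
  have hd : 0 < s1 - s2 := by linarith
  have hs1 : 0 < s1 := hs2.trans hs12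
  have h' : s1 * s1 * c ≤
      (1 + s2 / (s1 - s2)) * S + (1 + (s2 / (s1 - s2))⁻¹) * RN := hTN.trans h
  have h'' : s1 * s1 * c ≤
      (1 + s2 / (s1 - s2)) * S + (1 + (s2 / (s1 - s2))⁻¹) * (s2 * s2 * c) := by
    refine h'.trans ?_
    gcongr
  rw [inv_div] at h''
  have e1 : 1 + s2 / (s1 - s2) = s1 / (s1 - s2) := by field_simp; ring
  have e2 : 1 + (s1 - s2) / s2 = s1 / s2 := by field_simp; ring
  have e3 : s1 / s2 * (s2 * s2 * c) = s1 * s2 * c := by field_simp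
  rw [e1, e2, e3, div_mul_eq_mul_div] at h''
  have h6 : s1 * s1 * c * (s1 - s2) ≤ (s1 * S / (s1 - s2) + s1 * s2 * c) * (s1 - s2) :=
    mul_le_mul_of_nonneg_right h'' hd.le
  rw [add_mul, div_mul_cancel₀ _ hd.ne'] at h6
  nlinarith [h6]

/-- Let `{T i}` be an operator frame for `End*_A(H)` with bounds
`ν, δ` and `{R i}` an operator Bessel family with bound `ξ < ν`.  Then `{Tᵢ + Rᵢ}` is an
operator frame with bounds `(√ν − √ξ)²` and `(√δ + √ξ)²` (at the level of norms). -/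
theorem operatorFrame_perturbation
    {A : Type*} [CStarAlgebra A] [PartialOrder A] [StarOrderedRing A]
    {H : Type*} [NormedAddCommGroup H] [NormedSpace ℂ H] [SMul A H] [CStarModule A H]
    {ι : Type*}
    (T R : ι → H →L[ℂ] H) (Tad Rad : ι → H →L[ℂ] H)
    (hTadj : ∀ (i) (x y : H), ⟪T i x, y⟫_A = ⟪x, Tad i y⟫_A)
    (hRadj : ∀ (i) (x y : H), ⟪R i x, y⟫_A = ⟪x, Rad i y⟫_A)
    (ν δ ξ : ℝ) (hν : 0 < ν) (hδ : 0 < δ) (hξ : 0 < ξ) (hξν : ξ < ν)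
    (hTsum : ∀ x : H, Summable fun i => ⟪T i x, T i x⟫_A)
    (hTframe : ∀ x : H,
      ν • ⟪x, x⟫_A ≤ ∑' i, ⟪T i x, T i x⟫_A ∧
      (∑' i, ⟪T i x, T i x⟫_A) ≤ δ • ⟪x, x⟫_A)
    (hRsum : ∀ x : H, Summable fun i => ⟪R i x, R i x⟫_A)
    (hRBessel : ∀ x : H, (∑' i, ⟪R i x, R i x⟫_A) ≤ ξ • ⟪x, x⟫_A) :
    ∀ x : H,
      (Summable fun i => ⟪(T i + R i) x, (T i + R i) x⟫_A) ∧
      (Real.sqrt ν - Real.sqrt ξ) ^ 2 * ‖x‖ ^ 2 ≤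
        ‖∑' i, ⟪(T i + R i) x, (T i + R i) x⟫_A‖ ∧
      ‖∑' i, ⟪(T i + R i) x, (T i + R i) x⟫_A‖ ≤
        (Real.sqrt δ + Real.sqrt ξ) ^ 2 * ‖x‖ ^ 2 := by
  intro x
  have nx2 : ‖(⟪x, x⟫_A)‖ = ‖x‖ ^ 2 := by
    rw [CStarModule.norm_eq_sqrt_norm_inner_self (A := A) x, Real.sq_sqrt (norm_nonneg _)]
  -- pointwise key inequalities
  have hkeyTR : ∀ {t : ℝ}, 0 < t → ∀ i,
      ⟪(T i + R i) x, (T i + R i) x⟫_A ≤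
        (1 + t) • ⟪T i x, T i x⟫_A + (1 + t⁻¹) • ⟪R i x, R i x⟫_A := by
    intro t ht i
    simpa using aux_key (A := A) (T i x) (R i x) ht
  have hkeyT : ∀ {t : ℝ}, 0 < t → ∀ i,
      ⟪T i x, T i x⟫_A ≤
        (1 + t) • ⟪(T i + R i) x, (T i + R i) x⟫_A + (1 + t⁻¹) • ⟪R i x, R i x⟫_A := by
    intro t ht i
    have h := aux_key (A := A) ((T i + R i) x) (-(R i x)) ht
    simpa using h
  -- summability
  have hmajsum : ∀ t : ℝ, Summable fun i =>
      (1 + t) • ⟪T i x, T i x⟫_A + (1 + t⁻¹) • ⟪R i x, R i x⟫_A :=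
    fun t => ((hTsum x).const_smul _).add ((hRsum x).const_smul _)
  have hsum : Summable fun i => ⟪(T i + R i) x, (T i + R i) x⟫_A :=
    aux_summable (fun i => CStarModule.inner_self_nonneg) (hkeyTR one_pos) (hmajsum 1)
  -- norms of the T and R sums
  have hT0 : (0 : A) ≤ ∑' i, ⟪T i x, T i x⟫_A :=
    tsum_nonneg fun i => CStarModule.inner_self_nonneg
  have hR0 : (0 : A) ≤ ∑' i, ⟪R i x, R i x⟫_A :=
    tsum_nonneg fun i => CStarModule.inner_self_nonneg
  have hS0 : (0 : A) ≤ ∑' i, ⟪(T i + R i) x, (T i + R i) x⟫_A :=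
    tsum_nonneg fun i => CStarModule.inner_self_nonneg
  have hTnorm : ‖∑' i, ⟪T i x, T i x⟫_A‖ ≤ δ * ‖x‖ ^ 2 := by
    calc ‖∑' i, ⟪T i x, T i x⟫_A‖ ≤ ‖δ • ⟪x, x⟫_A‖ :=
          CStarAlgebra.norm_le_norm_of_nonneg_of_le hT0 (hTframe x).2
      _ = δ * ‖x‖ ^ 2 := by rw [norm_smul, Real.norm_of_nonneg hδ.le, nx2]
  have hRnorm : ‖∑' i, ⟪R i x, R i x⟫_A‖ ≤ ξ * ‖x‖ ^ 2 := by
    calc ‖∑' i, ⟪R i x, R i x⟫_A‖ ≤ ‖ξ • ⟪x, x⟫_A‖ :=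
          CStarAlgebra.norm_le_norm_of_nonneg_of_le hR0 (hRBessel x)
      _ = ξ * ‖x‖ ^ 2 := by rw [norm_smul, Real.norm_of_nonneg hξ.le, nx2]
  have hTlow : ν * ‖x‖ ^ 2 ≤ ‖∑' i, ⟪T i x, T i x⟫_A‖ := by
    have h0 : (0 : A) ≤ ν • ⟪x, x⟫_A :=
      smul_nonneg hν.le CStarModule.inner_self_nonneg
    calc ν * ‖x‖ ^ 2 = ‖ν • ⟪x, x⟫_A‖ := by
          rw [norm_smul, Real.norm_of_nonneg hν.le, nx2]
      _ ≤ ‖∑' i, ⟪T i x, T i x⟫_A‖ :=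
          CStarAlgebra.norm_le_norm_of_nonneg_of_le h0 (hTframe x).1
  -- generic combined bounds
  have hup : ∀ {t : ℝ}, 0 < t →
      ‖∑' i, ⟪(T i + R i) x, (T i + R i) x⟫_A‖ ≤
        (1 + t) * ‖∑' i, ⟪T i x, T i x⟫_A‖ + (1 + t⁻¹) * ‖∑' i, ⟪R i x, R i x⟫_A‖ := by
    intro t ht
    have hle := Summable.tsum_le_tsum (hkeyTR ht) hsum (hmajsum t)
    rw [Summable.tsum_add ((hTsum x).const_smul _) ((hRsum x).const_smul _),
      Summable.tsum_const_smul _ (hTsum x), Summable.tsum_const_smul _ (hRsum x)] at hle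
    calc ‖∑' i, ⟪(T i + R i) x, (T i + R i) x⟫_A‖
        ≤ ‖(1 + t) • ∑' i, ⟪T i x, T i x⟫_A + (1 + t⁻¹) • ∑' i, ⟪R i x, R i x⟫_A‖ :=
          CStarAlgebra.norm_le_norm_of_nonneg_of_le hS0 hle
      _ ≤ (1 + t) * ‖∑' i, ⟪T i x, T i x⟫_A‖ + (1 + t⁻¹) * ‖∑' i, ⟪R i x, R i x⟫_A‖ := by
          refine (norm_add_le _ _).trans ?_
          rw [norm_smul, norm_smul, Real.norm_of_nonneg (by positivity),
            Real.norm_of_nonneg (by positivity)]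
  have hlow : ∀ {t : ℝ}, 0 < t →
      ‖∑' i, ⟪T i x, T i x⟫_A‖ ≤
        (1 + t) * ‖∑' i, ⟪(T i + R i) x, (T i + R i) x⟫_A‖ +
          (1 + t⁻¹) * ‖∑' i, ⟪R i x, R i x⟫_A‖ := by
    intro t ht
    have hle := Summable.tsum_le_tsum (hkeyT ht) (hTsum x)
      ((hsum.const_smul _).add ((hRsum x).const_smul _))
    rw [Summable.tsum_add (hsum.const_smul _) ((hRsum x).const_smul _),
      Summable.tsum_const_smul _ hsum, Summable.tsum_const_smul _ (hRsum x)] at hle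
    calc ‖∑' i, ⟪T i x, T i x⟫_A‖
        ≤ ‖(1 + t) • ∑' i, ⟪(T i + R i) x, (T i + R i) x⟫_A +
            (1 + t⁻¹) • ∑' i, ⟪R i x, R i x⟫_A‖ :=
          CStarAlgebra.norm_le_norm_of_nonneg_of_le hT0 hle
      _ ≤ (1 + t) * ‖∑' i, ⟪(T i + R i) x, (T i + R i) x⟫_A‖ +
            (1 + t⁻¹) * ‖∑' i, ⟪R i x, R i x⟫_A‖ := by
          refine (norm_add_le _ _).trans ?_
          rw [norm_smul, norm_smul, Real.norm_of_nonneg (by positivity),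
            Real.norm_of_nonneg (by positivity)]
  refine ⟨hsum, ?_, ?_⟩
  · -- lower bound, t = √ξ / (√ν − √ξ)
    have hs1 : (0:ℝ) < Real.sqrt ν := Real.sqrt_pos.mpr hν
    have hs2 : (0:ℝ) < Real.sqrt ξ := Real.sqrt_pos.mpr hξ
    have hs12 : Real.sqrt ξ < Real.sqrt ν := Real.sqrt_lt_sqrt hξ.le hξν
    have h1 : Real.sqrt ν * Real.sqrt ν = ν := Real.mul_self_sqrt hν.le
    have h2 : Real.sqrt ξ * Real.sqrt ξ = ξ := Real.mul_self_sqrt hξ.le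
    have ht : 0 < Real.sqrt ξ / (Real.sqrt ν - Real.sqrt ξ) := by
      apply div_pos hs2; linarith
    exact aux_lower hs2 hs12 (by positivity) (norm_nonneg _)
      (by rw [h1]; exact hTlow) (by rw [h2]; exact hRnorm) (hlow ht)
  · -- upper bound, t = √ξ / √δ
    have hs1 : (0:ℝ) < Real.sqrt δ := Real.sqrt_pos.mpr hδ
    have hs2 : (0:ℝ) < Real.sqrt ξ := Real.sqrt_pos.mpr hξ
    have h1 : Real.sqrt δ * Real.sqrt δ = δ := Real.mul_self_sqrt hδ.le
    have h2 : Real.sqrt ξ * Real.sqrt ξ = ξ := Real.mul_self_sqrt hξ.le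
    have ht : 0 < Real.sqrt ξ / Real.sqrt δ := div_pos hs2 hs1
    exact aux_upper hs1 hs2 (by positivity)
      (by rw [h1]; exact hTnorm) (by rw [h2]; exact hRnorm) (hup ht)
end
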